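/- arXiv:1109.3151 — 2 statements merged into one kernel-verified Lean document; each statement's English description precedes it below -/
import Mathlib

section
/- For all p, q ∈ C([0,T], ℝ), the market-clearing operator satisfies ‖T₅p − T₅q‖_∞ ≤ c·‖p − q‖_∞, where c = (γκ²/(N^d+N^s))·[ N^d·M_{Lip(f^{φ^d})}·( (1/ρ²)·‖B^d‖²·r^{−1}·(M_{K^d}·M_{h^d} + M_{D^d}) + (1/ρ)·M_{h^d} ) + N^s·M_{Lip(f^{φ^s})}·( (1/ρ²)·‖B^s‖²·r^{−1}·(M_{K^s}·M_{h^s} + M_{D^s}) + (1/ρ)·M_{h^s} ) ]. -/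
set_option synthInstance.maxHeartbeats 1000000
set_option maxHeartbeats 2000000


open MeasureTheory Set
open scoped NNReal BigOperators

noncomputable section

/-- The map `S^{d_i}(p)(t) = ∫_t^T exp((τ - t) • Aᵀ) (K(τ) h + D) p(τ) dτ`
(here `Aᵀ` is realized as the adjoint of `A` on Euclidean space). -/
noncomputable def Svec {n : ℕ} (T : ℝ)
    (A : EuclideanSpace ℝ (Fin n) →L[ℝ] EuclideanSpace ℝ (Fin n))
    (K : ℝ → (EuclideanSpace ℝ (Fin n) →L[ℝ] EuclideanSpace ℝ (Fin n)))
    (h D : EuclideanSpace ℝ (Fin n)) (p : ℝ → ℝ) (t : ℝ) :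
    EuclideanSpace ℝ (Fin n) :=
  ∫ τ in t..T,
    p τ • (NormedSpace.exp ((τ - t) • (ContinuousLinearMap.adjoint A))) (K τ h + D)

/-- The closed-loop state map
`X(p)(t) = -∫_0^t exp((t-τ) • A) (B r⁻¹ Bᵀ S(p)(τ)) dτ + ∫_0^t exp((t-τ) • A) h p(τ) dτ`,
where `B r⁻¹ Bᵀ v = (r⁻¹ ⟪B, v⟫) • B`. -/
noncomputable def Xvec {n : ℕ} (T : ℝ)
    (A : EuclideanSpace ℝ (Fin n) →L[ℝ] EuclideanSpace ℝ (Fin n))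
    (K : ℝ → (EuclideanSpace ℝ (Fin n) →L[ℝ] EuclideanSpace ℝ (Fin n)))
    (B h D : EuclideanSpace ℝ (Fin n)) (r : ℝ) (p : ℝ → ℝ) (t : ℝ) :
    EuclideanSpace ℝ (Fin n) :=
  -(∫ τ in (0 : ℝ)..t,
      (NormedSpace.exp ((t - τ) • A))
        ((r⁻¹ * (inner ℝ B (Svec T A K h D p τ) : ℝ)) • B))
  + ∫ τ in (0 : ℝ)..t, p τ • (NormedSpace.exp ((t - τ) • A)) h

/-- The market clearing operator
`(T₅ p)(t) = (γ/(N^d+N^s)) (∑ᵢ f^{φ^{d_i}}(X^{d_i}(p)(t)) + ∑ⱼ f^{φ^{s_j}}(X^{s_j}(p)(t)) + η)`. -/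
noncomputable def Tmkt {nd ns Nd Ns : ℕ} (T : ℝ)
    (Ad : EuclideanSpace ℝ (Fin nd) →L[ℝ] EuclideanSpace ℝ (Fin nd))
    (As : EuclideanSpace ℝ (Fin ns) →L[ℝ] EuclideanSpace ℝ (Fin ns))
    (Kd : ℝ → (EuclideanSpace ℝ (Fin nd) →L[ℝ] EuclideanSpace ℝ (Fin nd)))
    (Ks : ℝ → (EuclideanSpace ℝ (Fin ns) →L[ℝ] EuclideanSpace ℝ (Fin ns)))
    (Bd : EuclideanSpace ℝ (Fin nd)) (Bs : EuclideanSpace ℝ (Fin ns))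
    (hd Dd : Fin Nd → EuclideanSpace ℝ (Fin nd))
    (hs Ds : Fin Ns → EuclideanSpace ℝ (Fin ns))
    (fφd : Fin Nd → (EuclideanSpace ℝ (Fin nd) → ℝ))
    (fφs : Fin Ns → (EuclideanSpace ℝ (Fin ns) → ℝ))
    (r γ η : ℝ) (p : ℝ → ℝ) (t : ℝ) : ℝ :=
  (γ / ((Nd : ℝ) + (Ns : ℝ))) *
    ((∑ i, fφd i (Xvec T Ad Kd Bd (hd i) (Dd i) r p t)) +
     (∑ j, fφs j (Xvec T As Ks Bs (hs j) (Ds j) r p t)) + η)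

end

noncomputable instance instNormedAlgebraRatEuclCLM {n : ℕ} :
    NormedAlgebra ℚ (EuclideanSpace ℝ (Fin n) →L[ℝ] EuclideanSpace ℝ (Fin n)) :=
  NormedAlgebra.restrictScalars ℚ ℝ _

lemma int_exp_right {ρ : ℝ} (hρ : 0 < ρ) {a b : ℝ} (hab : a ≤ b) :
    ∫ τ in a..b, Real.exp (-ρ * (τ - a)) ≤ 1 / ρ := by
  have key : ∀ τ : ℝ, HasDerivAt (fun τ : ℝ => -Real.exp (-ρ * (τ - a)) / ρ)
      (Real.exp (-ρ * (τ - a))) τ := by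
    intro τ
    have h1 : HasDerivAt (fun τ : ℝ => -ρ * (τ - a)) (-ρ) τ := by
      simpa using ((hasDerivAt_id τ).sub_const a).const_mul (-ρ)
    have h2 := h1.exp
    have h3 := (h2.div_const ρ).neg
    have h4 : HasDerivAt (fun τ : ℝ => -(Real.exp (-ρ * (τ - a)) / ρ))
        (-(Real.exp (-ρ * (τ - a)) * -ρ / ρ)) τ := h3
    simpa [neg_div, mul_div_assoc, div_self hρ.ne'] using h4
  rw [intervalIntegral.integral_eq_sub_of_hasDerivAt (fun τ _ => key τ)
    (Continuous.intervalIntegrable (by continuity) a b)]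
  have e2 : Real.exp (-ρ * (a - a)) = 1 := by simp
  rw [e2]
  have h4 : 0 ≤ Real.exp (-ρ * (b - a)) / ρ := by positivity
  have h5 : -Real.exp (-ρ * (b - a)) / ρ - -1 / ρ = 1 / ρ - Real.exp (-ρ * (b - a)) / ρ := by
    ring
  rw [h5]
  linarith

lemma int_exp_left {ρ : ℝ} (hρ : 0 < ρ) {a b : ℝ} (hab : a ≤ b) :
    ∫ τ in a..b, Real.exp (-ρ * (b - τ)) ≤ 1 / ρ := by
  have key : ∀ τ : ℝ, HasDerivAt (fun τ : ℝ => Real.exp (-ρ * (b - τ)) / ρ)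
      (Real.exp (-ρ * (b - τ))) τ := by
    intro τ
    have h1 : HasDerivAt (fun τ : ℝ => -ρ * (b - τ)) ρ τ := by
      simpa using ((hasDerivAt_id τ).const_sub b).const_mul (-ρ)
    have h2 := h1.exp
    have h3 := h2.div_const ρ
    simpa [mul_div_assoc, div_self hρ.ne'] using h3
  rw [intervalIntegral.integral_eq_sub_of_hasDerivAt (fun τ _ => key τ)
    (Continuous.intervalIntegrable (by continuity) a b)]
  have e2 : Real.exp (-ρ * (b - b)) = 1 := by simp
  rw [e2]
  have h4 : 0 ≤ Real.exp (-ρ * (b - a)) / ρ := by positivity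
  linarith

lemma exp_adjoint_norm {n : ℕ} (A : EuclideanSpace ℝ (Fin n) →L[ℝ] EuclideanSpace ℝ (Fin n))
    (s : ℝ) :
    ‖NormedSpace.exp (s • ContinuousLinearMap.adjoint A)‖ = ‖NormedSpace.exp (s • A)‖ := by
  rw [show NormedSpace.exp (s • ContinuousLinearMap.adjoint A)
      = ContinuousLinearMap.adjoint (NormedSpace.exp (s • A)) by
    rw [← ContinuousLinearMap.star_eq_adjoint, ← ContinuousLinearMap.star_eq_adjoint,
      NormedSpace.star_exp, star_smul, star_trivial s]]
  exact LinearIsometryEquiv.norm_map ContinuousLinearMap.adjoint _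

lemma norm_int_le_exp_right {E' : Type*} [NormedAddCommGroup E'] [NormedSpace ℝ E']
    {f : ℝ → E'} {a b C ρ : ℝ} (hρ : 0 < ρ) (hab : a ≤ b) (hC : 0 ≤ C)
    (hbound : ∀ τ ∈ Ioc a b, ‖f τ‖ ≤ C * Real.exp (-ρ * (τ - a))) :
    ‖∫ τ in a..b, f τ‖ ≤ C / ρ := by
  have hg : IntervalIntegrable (fun τ => C * Real.exp (-ρ * (τ - a))) volume a b :=
    Continuous.intervalIntegrable (by continuity) a b
  refine le_trans (intervalIntegral.norm_integral_le_abs_of_norm_le ?_ hg) ?_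
  · refine (ae_restrict_mem measurableSet_uIoc).mono (fun τ hτ => ?_)
    rw [Set.uIoc_of_le hab] at hτ
    exact hbound τ hτ
  · rw [intervalIntegral.integral_const_mul, abs_of_nonneg (mul_nonneg hC
      (intervalIntegral.integral_nonneg hab (fun x _ => (Real.exp_pos _).le)))]
    calc C * ∫ τ in a..b, Real.exp (-ρ * (τ - a)) ≤ C * (1 / ρ) :=
          mul_le_mul_of_nonneg_left (int_exp_right hρ hab) hC
      _ = C / ρ := by ring

lemma norm_int_le_exp_left {E' : Type*} [NormedAddCommGroup E'] [NormedSpace ℝ E']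
    {f : ℝ → E'} {a b C ρ : ℝ} (hρ : 0 < ρ) (hab : a ≤ b) (hC : 0 ≤ C)
    (hbound : ∀ τ ∈ Ioc a b, ‖f τ‖ ≤ C * Real.exp (-ρ * (b - τ))) :
    ‖∫ τ in a..b, f τ‖ ≤ C / ρ := by
  have hg : IntervalIntegrable (fun τ => C * Real.exp (-ρ * (b - τ))) volume a b :=
    Continuous.intervalIntegrable (by continuity) a b
  refine le_trans (intervalIntegral.norm_integral_le_abs_of_norm_le ?_ hg) ?_
  · refine (ae_restrict_mem measurableSet_uIoc).mono (fun τ hτ => ?_)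
    rw [Set.uIoc_of_le hab] at hτ
    exact hbound τ hτ
  · rw [intervalIntegral.integral_const_mul, abs_of_nonneg (mul_nonneg hC
      (intervalIntegral.integral_nonneg hab (fun x _ => (Real.exp_pos _).le)))]
    calc C * ∫ τ in a..b, Real.exp (-ρ * (b - τ)) ≤ C * (1 / ρ) :=
          mul_le_mul_of_nonneg_left (int_exp_left hρ hab) hC
      _ = C / ρ := by ring

lemma Svec_sub_bound {n : ℕ} {T : ℝ} (hT : 0 < T)
    (A : EuclideanSpace ℝ (Fin n) →L[ℝ] EuclideanSpace ℝ (Fin n))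
    {κ ρ : ℝ} (hρ : 0 < ρ)
    (hA : ∀ t : ℝ, 0 ≤ t → ‖NormedSpace.exp (t • A)‖ ≤ κ * Real.exp (-ρ * t))
    {K : ℝ → (EuclideanSpace ℝ (Fin n) →L[ℝ] EuclideanSpace ℝ (Fin n))}
    (hKc : ContinuousOn K (Icc 0 T))
    {MK : ℝ} (hMK : ∀ t ∈ Icc (0:ℝ) T, ‖K t‖ ≤ MK)
    (h D : EuclideanSpace ℝ (Fin n)) {Mh MD : ℝ} (hMh : ‖h‖ ≤ Mh) (hMD : ‖D‖ ≤ MD)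
    {p q : ℝ → ℝ} (hp : ContinuousOn p (Icc 0 T)) (hq : ContinuousOn q (Icc 0 T))
    {P : ℝ} (hP : ∀ τ ∈ Icc (0:ℝ) T, |p τ - q τ| ≤ P)
    {t : ℝ} (ht : t ∈ Icc (0:ℝ) T) :
    ‖Svec T A K h D p t - Svec T A K h D q t‖ ≤ κ / ρ * ((MK * Mh + MD) * P) := by
  obtain ⟨ht0, htT⟩ := ht
  have hsub : Icc t T ⊆ Icc (0:ℝ) T := Icc_subset_Icc ht0 le_rfl
  have huIcc : uIcc t T = Icc t T := uIcc_of_le htT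
  set A' := ContinuousLinearMap.adjoint A with hA'
  have hMK0 : 0 ≤ MK := le_trans (norm_nonneg _) (hMK 0 ⟨le_rfl, hT.le⟩)
  have hMh0 : 0 ≤ Mh := le_trans (norm_nonneg _) hMh
  have hMD0 : 0 ≤ MD := le_trans (norm_nonneg _) hMD
  have hP0 : 0 ≤ P := le_trans (abs_nonneg _) (hP 0 ⟨le_rfl, hT.le⟩)
  have hκ0 : 0 ≤ κ := by
    have h0 := hA 0 le_rfl
    simp only [mul_zero, neg_zero, Real.exp_zero, mul_one] at h0
    exact le_trans (norm_nonneg _) h0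
  have hvcont : ContinuousOn
      (fun τ => (NormedSpace.exp ((τ - t) • A')) (K τ h + D)) (Icc t T) := by
    apply ContinuousOn.clm_apply
    · exact (NormedSpace.exp_continuous.comp
        ((continuous_id.sub continuous_const).smul continuous_const)).continuousOn
    · exact ((hKc.mono hsub).clm_apply continuousOn_const).add continuousOn_const
  have hip : IntervalIntegrable
      (fun τ => p τ • (NormedSpace.exp ((τ - t) • A')) (K τ h + D)) volume t T := by
    apply ContinuousOn.intervalIntegrable
    rw [huIcc]
    exact (hp.mono hsub).smul hvcont
  have hiq : IntervalIntegrable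
      (fun τ => q τ • (NormedSpace.exp ((τ - t) • A')) (K τ h + D)) volume t T := by
    apply ContinuousOn.intervalIntegrable
    rw [huIcc]
    exact (hq.mono hsub).smul hvcont
  have hdiff : Svec T A K h D p t - Svec T A K h D q t
      = ∫ τ in t..T, (p τ - q τ) • (NormedSpace.exp ((τ - t) • A')) (K τ h + D) := by
    rw [Svec, Svec, ← intervalIntegral.integral_sub hip hiq]
    apply intervalIntegral.integral_congr
    intro τ _
    simp only [sub_smul]
  rw [hdiff]
  have key : ‖∫ τ in t..T, (p τ - q τ) • (NormedSpace.exp ((τ - t) • A')) (K τ h + D)‖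
      ≤ ((MK * Mh + MD) * P * κ) / ρ := by
    apply norm_int_le_exp_right hρ htT (by positivity)
    intro τ hτ
    have hτm : τ ∈ Icc (0:ℝ) T := ⟨le_trans ht0 hτ.1.le, hτ.2⟩
    have hτt : (0:ℝ) ≤ τ - t := sub_nonneg.2 hτ.1.le
    have h1 : ‖K τ h + D‖ ≤ MK * Mh + MD :=
      le_trans (norm_add_le _ _) (add_le_add
        (le_trans ((K τ).le_opNorm h) (mul_le_mul (hMK τ hτm) hMh (norm_nonneg h) hMK0)) hMD)
    have h2 : ‖NormedSpace.exp ((τ - t) • A')‖ * ‖K τ h + D‖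
        ≤ (κ * Real.exp (-ρ * (τ - t))) * (MK * Mh + MD) := by
      apply mul_le_mul _ h1 (norm_nonneg _) (by positivity)
      rw [hA', exp_adjoint_norm]
      exact hA _ hτt
    calc ‖(p τ - q τ) • (NormedSpace.exp ((τ - t) • A')) (K τ h + D)‖
        = |p τ - q τ| * ‖(NormedSpace.exp ((τ - t) • A')) (K τ h + D)‖ := by
          rw [norm_smul, Real.norm_eq_abs]
      _ ≤ P * ((κ * Real.exp (-ρ * (τ - t))) * (MK * Mh + MD)) :=
          mul_le_mul (hP τ hτm)
            (le_trans ((NormedSpace.exp ((τ - t) • A')).le_opNorm _) h2)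
            (norm_nonneg _) hP0
      _ = ((MK * Mh + MD) * P * κ) * Real.exp (-ρ * (τ - t)) := by ring
  calc ‖∫ τ in t..T, (p τ - q τ) • (NormedSpace.exp ((τ - t) • A')) (K τ h + D)‖
      ≤ ((MK * Mh + MD) * P * κ) / ρ := key
    _ = κ / ρ * ((MK * Mh + MD) * P) := by ring

lemma Svec_continuousOn {n : ℕ} {T : ℝ} (hT : 0 < T)
    (A : EuclideanSpace ℝ (Fin n) →L[ℝ] EuclideanSpace ℝ (Fin n))
    {K : ℝ → (EuclideanSpace ℝ (Fin n) →L[ℝ] EuclideanSpace ℝ (Fin n))}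
    (hKc : ContinuousOn K (Icc 0 T))
    (h D : EuclideanSpace ℝ (Fin n))
    {p : ℝ → ℝ} (hp : ContinuousOn p (Icc 0 T)) :
    ContinuousOn (Svec T A K h D p) (Icc 0 T) := by
  set A' := ContinuousLinearMap.adjoint A with hA'
  set g : ℝ → EuclideanSpace ℝ (Fin n) :=
    fun τ => p τ • (NormedSpace.exp (τ • A')) (K τ h + D) with hg
  have hgc : ContinuousOn g (Icc 0 T) := by
    apply hp.smul
    apply ContinuousOn.clm_apply
    · exact (NormedSpace.exp_continuous.comp (continuous_id.smul continuous_const)).continuousOn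
    · exact (hKc.clm_apply continuousOn_const).add continuousOn_const
  have hgint : IntegrableOn g (uIcc 0 T) volume := by
    rw [uIcc_of_le hT.le]
    exact hgc.integrableOn_Icc
  have hFc : ContinuousOn (fun t => ∫ τ in t..T, g τ) (Icc 0 T) := by
    have := intervalIntegral.continuousOn_primitive_interval_left hgint
    rwa [uIcc_of_le hT.le] at this
  have heq : EqOn (Svec T A K h D p)
      (fun t => (NormedSpace.exp ((-t) • A')) (∫ τ in t..T, g τ)) (Icc 0 T) := by
    intro t ht
    have hsub' : uIcc t T ⊆ uIcc (0:ℝ) T := by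
      rw [uIcc_of_le hT.le, uIcc_of_le ht.2]
      exact Icc_subset_Icc ht.1 le_rfl
    have hgi : IntervalIntegrable g volume t T := (hgint.mono_set hsub').intervalIntegrable
    show Svec T A K h D p t = (NormedSpace.exp ((-t) • A')) (∫ τ in t..T, g τ)
    rw [Svec, ← ContinuousLinearMap.intervalIntegral_comp_comm _ hgi]
    apply intervalIntegral.integral_congr
    intro τ _
    have hcomm : Commute ((-t) • A') (τ • A') := ((Commute.refl A').smul_left _).smul_right _
    have hsplit : (τ - t) • A' = (-t) • A' + τ • A' := by
      rw [sub_eq_neg_add, add_smul]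
    simp only [hg]
    rw [hsplit, NormedSpace.exp_add_of_commute hcomm, ContinuousLinearMap.mul_apply,
      ContinuousLinearMap.map_smul]
  refine ContinuousOn.congr ?_ heq
  apply ContinuousOn.clm_apply
  · exact (NormedSpace.exp_continuous.comp (continuous_neg.smul continuous_const)).continuousOn
  · exact hFc

lemma Xvec_sub_bound {n : ℕ} {T : ℝ} (hT : 0 < T)
    (A : EuclideanSpace ℝ (Fin n) →L[ℝ] EuclideanSpace ℝ (Fin n))
    {κ ρ : ℝ} (hκ1 : 1 ≤ κ) (hρ : 0 < ρ)
    (hA : ∀ t : ℝ, 0 ≤ t → ‖NormedSpace.exp (t • A)‖ ≤ κ * Real.exp (-ρ * t))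
    (B : EuclideanSpace ℝ (Fin n)) {r : ℝ} (hr : 0 < r)
    {K : ℝ → (EuclideanSpace ℝ (Fin n) →L[ℝ] EuclideanSpace ℝ (Fin n))}
    (hKc : ContinuousOn K (Icc 0 T))
    {MK : ℝ} (hMK : ∀ t ∈ Icc (0:ℝ) T, ‖K t‖ ≤ MK)
    (h D : EuclideanSpace ℝ (Fin n)) {Mh MD : ℝ} (hMh : ‖h‖ ≤ Mh) (hMD : ‖D‖ ≤ MD)
    {p q : ℝ → ℝ} (hp : ContinuousOn p (Icc 0 T)) (hq : ContinuousOn q (Icc 0 T))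
    {P : ℝ} (hP : ∀ τ ∈ Icc (0:ℝ) T, |p τ - q τ| ≤ P)
    {t : ℝ} (ht : t ∈ Icc (0:ℝ) T) :
    ‖Xvec T A K B h D r p t - Xvec T A K B h D r q t‖
      ≤ κ ^ 2 * ((1 / ρ ^ 2) * ‖B‖ ^ 2 * r⁻¹ * (MK * Mh + MD) + (1 / ρ) * Mh) * P := by
  obtain ⟨ht0, htT⟩ := ht
  have hsub : Icc (0:ℝ) t ⊆ Icc (0:ℝ) T := Icc_subset_Icc le_rfl htT
  have huIcc : uIcc (0:ℝ) t = Icc (0:ℝ) t := uIcc_of_le ht0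
  have hMK0 : 0 ≤ MK := le_trans (norm_nonneg _) (hMK 0 ⟨le_rfl, hT.le⟩)
  have hMh0 : 0 ≤ Mh := le_trans (norm_nonneg _) hMh
  have hMD0 : 0 ≤ MD := le_trans (norm_nonneg _) hMD
  have hP0 : 0 ≤ P := le_trans (abs_nonneg _) (hP 0 ⟨le_rfl, hT.le⟩)
  have hκ0 : (0:ℝ) ≤ κ := le_trans zero_le_one hκ1
  set CS : ℝ := κ / ρ * ((MK * Mh + MD) * P) with hCS
  have hCS0 : 0 ≤ CS := by positivity
  have hSb : ∀ τ ∈ Icc (0:ℝ) T,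
      ‖Svec T A K h D p τ - Svec T A K h D q τ‖ ≤ CS := fun τ hτ =>
    Svec_sub_bound hT A hρ hA hKc hMK h D hMh hMD hp hq hP hτ
  have hSpc := Svec_continuousOn hT A hKc h D hp
  have hSqc := Svec_continuousOn hT A hKc h D hq
  have hexpc : ContinuousOn (fun τ : ℝ => NormedSpace.exp ((t - τ) • A)) (Icc 0 t) :=
    (NormedSpace.exp_continuous.comp
      ((continuous_const.sub continuous_id).smul continuous_const)).continuousOn
  -- the four integrands
  set f1p : ℝ → EuclideanSpace ℝ (Fin n) := fun τ =>
    (NormedSpace.exp ((t - τ) • A)) ((r⁻¹ * (inner ℝ B (Svec T A K h D p τ) : ℝ)) • B) with hf1p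
  set f1q : ℝ → EuclideanSpace ℝ (Fin n) := fun τ =>
    (NormedSpace.exp ((t - τ) • A)) ((r⁻¹ * (inner ℝ B (Svec T A K h D q τ) : ℝ)) • B) with hf1q
  set f2p : ℝ → EuclideanSpace ℝ (Fin n) := fun τ =>
    p τ • (NormedSpace.exp ((t - τ) • A)) h with hf2p
  set f2q : ℝ → EuclideanSpace ℝ (Fin n) := fun τ =>
    q τ • (NormedSpace.exp ((t - τ) • A)) h with hf2q
  have hi1p : IntervalIntegrable f1p volume 0 t := by
    apply ContinuousOn.intervalIntegrable
    rw [huIcc]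
    exact hexpc.clm_apply ((continuousOn_const.fun_mul
      (continuousOn_const.inner (hSpc.mono hsub))).fun_smul continuousOn_const)
  have hi1q : IntervalIntegrable f1q volume 0 t := by
    apply ContinuousOn.intervalIntegrable
    rw [huIcc]
    exact hexpc.clm_apply ((continuousOn_const.fun_mul
      (continuousOn_const.inner (hSqc.mono hsub))).fun_smul continuousOn_const)
  have hi2p : IntervalIntegrable f2p volume 0 t := by
    apply ContinuousOn.intervalIntegrable
    rw [huIcc]
    exact (hp.mono hsub).smul (hexpc.clm_apply continuousOn_const)
  have hi2q : IntervalIntegrable f2q volume 0 t := by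
    apply ContinuousOn.intervalIntegrable
    rw [huIcc]
    exact (hq.mono hsub).smul (hexpc.clm_apply continuousOn_const)
  have hdiff : Xvec T A K B h D r p t - Xvec T A K B h D r q t
      = -(∫ τ in (0:ℝ)..t, (f1p τ - f1q τ)) + ∫ τ in (0:ℝ)..t, (f2p τ - f2q τ) := by
    rw [Xvec, Xvec, intervalIntegral.integral_sub hi1p hi1q,
      intervalIntegral.integral_sub hi2p hi2q]
    abel
  rw [hdiff]
  have hb1 : ‖∫ τ in (0:ℝ)..t, (f1p τ - f1q τ)‖ ≤ (κ * (r⁻¹ * ‖B‖ ^ 2 * CS)) / ρ := by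
    apply norm_int_le_exp_left hρ ht0 (by positivity)
    intro τ hτ
    have hτm : τ ∈ Icc (0:ℝ) T := ⟨hτ.1.le, le_trans hτ.2 htT⟩
    have hτt : (0:ℝ) ≤ t - τ := sub_nonneg.2 hτ.2
    have heq1 : f1p τ - f1q τ = (NormedSpace.exp ((t - τ) • A))
        ((r⁻¹ * (inner ℝ B (Svec T A K h D p τ - Svec T A K h D q τ) : ℝ)) • B) := by
      rw [hf1p, hf1q]
      rw [← map_sub, ← sub_smul]
      congr 2
      rw [inner_sub_right]
      ring
    rw [heq1]
    have hinner : |(inner ℝ B (Svec T A K h D p τ - Svec T A K h D q τ) : ℝ)|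
        ≤ ‖B‖ * CS := le_trans (abs_real_inner_le_norm _ _)
      (mul_le_mul_of_nonneg_left (hSb τ hτm) (norm_nonneg B))
    have hvec : ‖(r⁻¹ * (inner ℝ B (Svec T A K h D p τ - Svec T A K h D q τ) : ℝ)) • B‖
        ≤ r⁻¹ * ‖B‖ ^ 2 * CS := by
      rw [norm_smul, Real.norm_eq_abs, abs_mul, abs_of_nonneg (inv_nonneg.2 hr.le)]
      calc r⁻¹ * |(inner ℝ B (Svec T A K h D p τ - Svec T A K h D q τ) : ℝ)| * ‖B‖
          ≤ r⁻¹ * (‖B‖ * CS) * ‖B‖ := by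
            apply mul_le_mul_of_nonneg_right _ (norm_nonneg B)
            exact mul_le_mul_of_nonneg_left hinner (inv_nonneg.2 hr.le)
        _ = r⁻¹ * ‖B‖ ^ 2 * CS := by ring
    calc ‖(NormedSpace.exp ((t - τ) • A))
          ((r⁻¹ * (inner ℝ B (Svec T A K h D p τ - Svec T A K h D q τ) : ℝ)) • B)‖
        ≤ ‖NormedSpace.exp ((t - τ) • A)‖ * ‖(r⁻¹ *
            (inner ℝ B (Svec T A K h D p τ - Svec T A K h D q τ) : ℝ)) • B‖ :=
          ContinuousLinearMap.le_opNorm _ _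
      _ ≤ (κ * Real.exp (-ρ * (t - τ))) * (r⁻¹ * ‖B‖ ^ 2 * CS) :=
          mul_le_mul (hA _ hτt) hvec (norm_nonneg _) (by positivity)
      _ = (κ * (r⁻¹ * ‖B‖ ^ 2 * CS)) * Real.exp (-ρ * (t - τ)) := by ring
  have hb2 : ‖∫ τ in (0:ℝ)..t, (f2p τ - f2q τ)‖ ≤ (κ * Mh * P) / ρ := by
    apply norm_int_le_exp_left hρ ht0 (by positivity)
    intro τ hτ
    have hτm : τ ∈ Icc (0:ℝ) T := ⟨hτ.1.le, le_trans hτ.2 htT⟩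
    have hτt : (0:ℝ) ≤ t - τ := sub_nonneg.2 hτ.2
    have heq2 : f2p τ - f2q τ = (p τ - q τ) • (NormedSpace.exp ((t - τ) • A)) h := by
      rw [hf2p, hf2q, sub_smul]
    rw [heq2, norm_smul, Real.norm_eq_abs]
    have hexph : ‖(NormedSpace.exp ((t - τ) • A)) h‖ ≤ (κ * Real.exp (-ρ * (t - τ))) * Mh :=
      le_trans (ContinuousLinearMap.le_opNorm _ _)
        (mul_le_mul (hA _ hτt) hMh (norm_nonneg _) (by positivity))
    calc |p τ - q τ| * ‖(NormedSpace.exp ((t - τ) • A)) h‖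
        ≤ P * ((κ * Real.exp (-ρ * (t - τ))) * Mh) :=
          mul_le_mul (hP τ hτm) hexph (norm_nonneg _) hP0
      _ = (κ * Mh * P) * Real.exp (-ρ * (t - τ)) := by ring
  calc ‖-(∫ τ in (0:ℝ)..t, (f1p τ - f1q τ)) + ∫ τ in (0:ℝ)..t, (f2p τ - f2q τ)‖
      ≤ ‖∫ τ in (0:ℝ)..t, (f1p τ - f1q τ)‖ + ‖∫ τ in (0:ℝ)..t, (f2p τ - f2q τ)‖ := by
        refine le_trans (norm_add_le _ _) ?_
        rw [norm_neg]
    _ ≤ (κ * (r⁻¹ * ‖B‖ ^ 2 * CS)) / ρ + (κ * Mh * P) / ρ := add_le_add hb1 hb2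
    _ ≤ κ ^ 2 * ((1 / ρ ^ 2) * ‖B‖ ^ 2 * r⁻¹ * (MK * Mh + MD) + (1 / ρ) * Mh) * P := by
        rw [hCS]
        have e1 : (κ * (r⁻¹ * ‖B‖ ^ 2 * (κ / ρ * ((MK * Mh + MD) * P)))) / ρ
            = κ ^ 2 * ((1 / ρ ^ 2) * ‖B‖ ^ 2 * r⁻¹ * (MK * Mh + MD)) * P := by
          field_simp
        rw [e1]
        have e2 : (κ * Mh * P) / ρ ≤ κ ^ 2 * ((1 / ρ) * Mh) * P := by
          rw [div_le_iff₀ hρ]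
          have : κ ≤ κ ^ 2 := by nlinarith
          have hMhP : 0 ≤ Mh * P := mul_nonneg hMh0 hP0
          have := mul_le_mul_of_nonneg_right this (mul_nonneg hMhP (inv_nonneg.2 hρ.le))
          calc κ * Mh * P = κ * (Mh * P) := by ring
            _ ≤ κ ^ 2 * (Mh * P) := mul_le_mul_of_nonneg_right (by nlinarith) hMhP
            _ = κ ^ 2 * ((1 / ρ) * Mh) * P * ρ := by field_simp
        nlinarith [e2]

/-- The market-clearing operator `T₅` is Lipschitz on `C([0,T],ℝ)` with the
explicit constant `c` of Assumption (A7) of the paper: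
`‖T₅ p − T₅ q‖_∞ ≤ c ‖p − q‖_∞`. -/
theorem Tmkt_lipschitz_bound
    (T : ℝ) (hT : 0 < T)
    (Nd Ns nd ns : ℕ) (hNd : 0 < Nd) (hNs : 0 < Ns) (hnd : 0 < nd) (hns : 0 < ns)
    (Ad : EuclideanSpace ℝ (Fin nd) →L[ℝ] EuclideanSpace ℝ (Fin nd))
    (As : EuclideanSpace ℝ (Fin ns) →L[ℝ] EuclideanSpace ℝ (Fin ns))
    (κ ρ : ℝ) (hκ : 0 < κ) (hρ : 0 < ρ)
    (hAd : ∀ t : ℝ, 0 ≤ t → ‖NormedSpace.exp (t • Ad)‖ ≤ κ * Real.exp (-ρ * t))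
    (hAs : ∀ t : ℝ, 0 ≤ t → ‖NormedSpace.exp (t • As)‖ ≤ κ * Real.exp (-ρ * t))
    (Bd : EuclideanSpace ℝ (Fin nd)) (Bs : EuclideanSpace ℝ (Fin ns))
    (r γ : ℝ) (hr : 0 < r) (hγ : 0 < γ) (η : ℝ)
    (Kd : ℝ → (EuclideanSpace ℝ (Fin nd) →L[ℝ] EuclideanSpace ℝ (Fin nd)))
    (Ks : ℝ → (EuclideanSpace ℝ (Fin ns) →L[ℝ] EuclideanSpace ℝ (Fin ns)))
    (hKdc : ContinuousOn Kd (Icc 0 T)) (hKsc : ContinuousOn Ks (Icc 0 T))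
    (MKd MKs : ℝ)
    (hMKd : ∀ t ∈ Icc (0 : ℝ) T, ‖Kd t‖ ≤ MKd)
    (hMKs : ∀ t ∈ Icc (0 : ℝ) T, ‖Ks t‖ ≤ MKs)
    (hd Dd : Fin Nd → EuclideanSpace ℝ (Fin nd))
    (hs Ds : Fin Ns → EuclideanSpace ℝ (Fin ns))
    (fφd : Fin Nd → (EuclideanSpace ℝ (Fin nd) → ℝ))
    (fφs : Fin Ns → (EuclideanSpace ℝ (Fin ns) → ℝ))
    (Ld : Fin Nd → ℝ≥0) (Ls : Fin Ns → ℝ≥0)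
    (hLd : ∀ i, LipschitzWith (Ld i) (fφd i))
    (hLs : ∀ j, LipschitzWith (Ls j) (fφs j))
    (Mhd MDd Mhs MDs MLd MLs : ℝ)
    (hMhd : ∀ i, ‖hd i‖ ≤ Mhd) (hMDd : ∀ i, ‖Dd i‖ ≤ MDd)
    (hMhs : ∀ j, ‖hs j‖ ≤ Mhs) (hMDs : ∀ j, ‖Ds j‖ ≤ MDs)
    (hMLd : ∀ i, (Ld i : ℝ) ≤ MLd) (hMLs : ∀ j, (Ls j : ℝ) ≤ MLs)
    :
    ∀ p q : ℝ → ℝ, ContinuousOn p (Icc 0 T) → ContinuousOn q (Icc 0 T) →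
      (⨆ t : Icc (0 : ℝ) T,
          |Tmkt T Ad As Kd Ks Bd Bs hd Dd hs Ds fφd fφs r γ η p (t : ℝ) -
            Tmkt T Ad As Kd Ks Bd Bs hd Dd hs Ds fφd fφs r γ η q (t : ℝ)|) ≤
        ((γ * κ ^ 2 / ((Nd : ℝ) + (Ns : ℝ))) *
            ((Nd : ℝ) * MLd *
                ((1 / ρ ^ 2) * ‖Bd‖ ^ 2 * r⁻¹ * (MKd * Mhd + MDd) + (1 / ρ) * Mhd) +
             (Ns : ℝ) * MLs *
                ((1 / ρ ^ 2) * ‖Bs‖ ^ 2 * r⁻¹ * (MKs * Mhs + MDs) + (1 / ρ) * Mhs))) *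
          (⨆ t : Icc (0 : ℝ) T, |p (t : ℝ) - q (t : ℝ)|) := by
  intro p q hp hq
  haveI : Nonempty (Icc (0:ℝ) T) := ⟨⟨0, ⟨le_rfl, hT.le⟩⟩⟩
  set P := ⨆ t : Icc (0:ℝ) T, |p (t : ℝ) - q (t : ℝ)| with hPdef
  have hbdd : BddAbove (range fun t : Icc (0:ℝ) T => |p (t : ℝ) - q (t : ℝ)|) := by
    have himg : (range fun t : Icc (0:ℝ) T => |p (t : ℝ) - q (t : ℝ)|)
        = (fun t => |p t - q t|) '' (Icc 0 T) := by
      rw [Set.image_eq_range]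
    rw [himg]
    exact (isCompact_Icc.image_of_continuousOn ((hp.sub hq).abs)).bddAbove
  have hP : ∀ τ ∈ Icc (0:ℝ) T, |p τ - q τ| ≤ P := fun τ hτ => le_ciSup hbdd ⟨τ, hτ⟩
  have hP0 : 0 ≤ P := le_trans (abs_nonneg _) (hP 0 ⟨le_rfl, hT.le⟩)
  haveI : Nonempty (Fin nd) := ⟨⟨0, hnd⟩⟩
  haveI : Nonempty (Fin ns) := ⟨⟨0, hns⟩⟩
  haveI : Nontrivial (EuclideanSpace ℝ (Fin nd)) :=
    inferInstanceAs (Nontrivial (PiLp 2 fun _ : Fin nd => ℝ))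
  have hκ1 : 1 ≤ κ := by
    have h0 := hAd 0 le_rfl
    rw [zero_smul ℝ Ad, NormedSpace.exp_zero, norm_one] at h0
    simpa using h0
  -- constants
  set cd : ℝ := κ ^ 2 * ((1 / ρ ^ 2) * ‖Bd‖ ^ 2 * r⁻¹ * (MKd * Mhd + MDd) + (1 / ρ) * Mhd)
    with hcd
  set cs : ℝ := κ ^ 2 * ((1 / ρ ^ 2) * ‖Bs‖ ^ 2 * r⁻¹ * (MKs * Mhs + MDs) + (1 / ρ) * Mhs)
    with hcs
  have i0 : Fin Nd := ⟨0, hNd⟩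
  have j0 : Fin Ns := ⟨0, hNs⟩
  have hMLd0 : 0 ≤ MLd := le_trans (Ld i0).2 (hMLd i0)
  have hMLs0 : 0 ≤ MLs := le_trans (Ls j0).2 (hMLs j0)
  have hMKd0 : 0 ≤ MKd := le_trans (norm_nonneg _) (hMKd 0 ⟨le_rfl, hT.le⟩)
  have hMKs0 : 0 ≤ MKs := le_trans (norm_nonneg _) (hMKs 0 ⟨le_rfl, hT.le⟩)
  have hMhd0 : 0 ≤ Mhd := le_trans (norm_nonneg _) (hMhd i0)
  have hMhs0 : 0 ≤ Mhs := le_trans (norm_nonneg _) (hMhs j0)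
  have hMDd0 : 0 ≤ MDd := le_trans (norm_nonneg _) (hMDd i0)
  have hMDs0 : 0 ≤ MDs := le_trans (norm_nonneg _) (hMDs j0)
  have hcd0 : 0 ≤ cd := by rw [hcd]; positivity
  have hcs0 : 0 ≤ cs := by rw [hcs]; positivity
  apply ciSup_le
  rintro ⟨t, htm⟩
  simp only
  have hterm_d : ∀ i : Fin Nd,
      |fφd i (Xvec T Ad Kd Bd (hd i) (Dd i) r p t) -
        fφd i (Xvec T Ad Kd Bd (hd i) (Dd i) r q t)| ≤ MLd * (cd * P) := by
    intro i
    have hX := Xvec_sub_bound hT Ad hκ1 hρ hAd Bd hr hKdc hMKd (hd i) (Dd i)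
      (hMhd i) (hMDd i) hp hq hP htm
    have hl := (hLd i).dist_le_mul (Xvec T Ad Kd Bd (hd i) (Dd i) r p t)
      (Xvec T Ad Kd Bd (hd i) (Dd i) r q t)
    rw [Real.dist_eq, dist_eq_norm] at hl
    refine le_trans hl ?_
    exact mul_le_mul (hMLd i) hX (norm_nonneg _) hMLd0
  have hterm_s : ∀ j : Fin Ns,
      |fφs j (Xvec T As Ks Bs (hs j) (Ds j) r p t) -
        fφs j (Xvec T As Ks Bs (hs j) (Ds j) r q t)| ≤ MLs * (cs * P) := by
    intro j
    have hX := Xvec_sub_bound hT As hκ1 hρ hAs Bs hr hKsc hMKs (hs j) (Ds j)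
      (hMhs j) (hMDs j) hp hq hP htm
    have hl := (hLs j).dist_le_mul (Xvec T As Ks Bs (hs j) (Ds j) r p t)
      (Xvec T As Ks Bs (hs j) (Ds j) r q t)
    rw [Real.dist_eq, dist_eq_norm] at hl
    refine le_trans hl ?_
    exact mul_le_mul (hMLs j) hX (norm_nonneg _) hMLs0
  have hsum_d : |(∑ i, fφd i (Xvec T Ad Kd Bd (hd i) (Dd i) r p t)) -
      ∑ i, fφd i (Xvec T Ad Kd Bd (hd i) (Dd i) r q t)| ≤ (Nd : ℝ) * (MLd * (cd * P)) := by
    rw [← Finset.sum_sub_distrib]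
    refine le_trans (Finset.abs_sum_le_sum_abs _ _) ?_
    refine le_trans (Finset.sum_le_sum (fun i _ => hterm_d i)) ?_
    rw [Finset.sum_const, Finset.card_univ, Fintype.card_fin, nsmul_eq_mul]
  have hsum_s : |(∑ j, fφs j (Xvec T As Ks Bs (hs j) (Ds j) r p t)) -
      ∑ j, fφs j (Xvec T As Ks Bs (hs j) (Ds j) r q t)| ≤ (Ns : ℝ) * (MLs * (cs * P)) := by
    rw [← Finset.sum_sub_distrib]
    refine le_trans (Finset.abs_sum_le_sum_abs _ _) ?_
    refine le_trans (Finset.sum_le_sum (fun j _ => hterm_s j)) ?_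
    rw [Finset.sum_const, Finset.card_univ, Fintype.card_fin, nsmul_eq_mul]
  have hN0 : (0:ℝ) < (Nd : ℝ) + (Ns : ℝ) := by
    have : (0:ℝ) < (Nd : ℝ) := by exact_mod_cast hNd
    have h2 : (0:ℝ) ≤ (Ns : ℝ) := Nat.cast_nonneg _
    linarith
  have habs : |Tmkt T Ad As Kd Ks Bd Bs hd Dd hs Ds fφd fφs r γ η p t -
      Tmkt T Ad As Kd Ks Bd Bs hd Dd hs Ds fφd fφs r γ η q t|
      ≤ (γ / ((Nd : ℝ) + (Ns : ℝ))) *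
        ((Nd : ℝ) * (MLd * (cd * P)) + (Ns : ℝ) * (MLs * (cs * P))) := by
    rw [Tmkt, Tmkt, ← mul_sub, abs_mul, abs_of_nonneg (by positivity : (0:ℝ) ≤ γ / ((Nd:ℝ)+(Ns:ℝ)))]
    apply mul_le_mul_of_nonneg_left _ (by positivity : (0:ℝ) ≤ γ / ((Nd:ℝ)+(Ns:ℝ)))
    have hre : (∑ i, fφd i (Xvec T Ad Kd Bd (hd i) (Dd i) r p t)) +
        (∑ j, fφs j (Xvec T As Ks Bs (hs j) (Ds j) r p t)) + η -
        ((∑ i, fφd i (Xvec T Ad Kd Bd (hd i) (Dd i) r q t)) +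
        (∑ j, fφs j (Xvec T As Ks Bs (hs j) (Ds j) r q t)) + η)
        = ((∑ i, fφd i (Xvec T Ad Kd Bd (hd i) (Dd i) r p t)) -
            ∑ i, fφd i (Xvec T Ad Kd Bd (hd i) (Dd i) r q t)) +
          ((∑ j, fφs j (Xvec T As Ks Bs (hs j) (Ds j) r p t)) -
            ∑ j, fφs j (Xvec T As Ks Bs (hs j) (Ds j) r q t)) := by ring
    rw [hre]
    exact le_trans (abs_add_le _ _) (add_le_add hsum_d hsum_s)
  refine le_trans habs (le_of_eq ?_)
  rw [hcd, hcs]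
  ring
end

section
/- Let n ≥ 1, T > 0, r > 0, let A be a real n×n matrix, B a real n×1 matrix, and Q a real symmetric positive semidefinite n×n matrix. Then there exists a unique continuously differentiable function K : [0,T] → Mat(n×n, ℝ) satisfying the matrix Riccati terminal value problem K'(t) + K(t)A + AᵀK(t) − K(t)B r^{−1} Bᵀ K(t) + Q = 0 for all t ∈ [0,T], with K(T) = 0; moreover K(t) is symmetric and positive semidefinite for every t ∈ [0,T]. -/
open Matrix Set

noncomputable section RiccatiLinfty

open NormedSpace

attribute [local instance] Matrix.linftyOpNormedAddCommGroup Matrix.linftyOpNormedRing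
  Matrix.linftyOpNormedAlgebra Matrix.instCompleteSpace

variable {m : Type*} [Fintype m] [DecidableEq m]

private def entryCLM (i j : m) : Matrix m m ℝ →L[ℝ] ℝ :=
  LinearMap.toContinuousLinearMap
    { toFun := fun M => M i j, map_add' := fun _ _ => rfl, map_smul' := fun _ _ => rfl }

private def ofCLM : (m → m → ℝ) →L[ℝ] Matrix m m ℝ :=
  LinearMap.toContinuousLinearMap
    { toFun := Matrix.of, map_add' := fun _ _ => rfl, map_smul' := fun _ _ => rfl }

/-- `myExp H t = exp (t • H)`, packaged as a plain function so that it does not depend on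
any norm structure chosen on matrices at use sites. -/
def myExp (H : Matrix m m ℝ) (t : ℝ) : Matrix m m ℝ := NormedSpace.exp (t • H)

lemma myExp_zero (H : Matrix m m ℝ) : myExp H 0 = 1 := by
  simp [myExp, exp_zero]

lemma myExp_entry_deriv (H : Matrix m m ℝ) (t : ℝ) (i j : m) :
    HasDerivAt (fun s : ℝ => myExp H s i j) ((H * myExp H t) i j) t :=
  (entryCLM i j).hasFDerivAt.comp_hasDerivAt t (hasDerivAt_exp_smul_const' (𝕂 := ℝ) H t)

lemma inv_entry_deriv {f : ℝ → Matrix m m ℝ} {f' : Matrix m m ℝ}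
    {s : Set ℝ} {t : ℝ}
    (hf : ∀ i j, HasDerivWithinAt (fun t => f t i j) (f' i j) s t)
    (hu : IsUnit (f t)) (i j : m) :
    HasDerivWithinAt (fun t => (f t)⁻¹ i j) ((-((f t)⁻¹ * f' * (f t)⁻¹)) i j) s t := by
  have hF : HasDerivWithinAt f (Matrix.of fun i j => f' i j) s t := by
    have : HasDerivWithinAt (fun t => (fun i j => f t i j)) (fun i j => f' i j) s t := by
      rw [hasDerivWithinAt_pi]; intro i; rw [hasDerivWithinAt_pi]; intro j; exact hf i j
    exact ofCLM.hasFDerivAt.comp_hasDerivWithinAt t this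
  obtain ⟨u, hu'⟩ := hu
  have hfd : HasFDerivAt Ring.inverse
      (-((ContinuousLinearMap.mulLeftRight ℝ (Matrix m m ℝ)) ↑u⁻¹) ↑u⁻¹) (f t) :=
    hu' ▸ hasFDerivAt_ringInverse u
  have hinv := hfd.comp_hasDerivWithinAt t hF
  have h2 : HasDerivWithinAt (fun t => Ring.inverse (f t))
      (-((u : Matrix m m ℝ)⁻¹ * Matrix.of (fun i j => f' i j) *
        (u : Matrix m m ℝ)⁻¹)) s t := by
    have := hinv; simp at this; exact this
  have h3 := (entryCLM i j).hasFDerivAt.comp_hasDerivWithinAt t h2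
  simp only [Function.comp, Matrix.nonsing_inv_eq_ringInverse] at h3 ⊢
  rw [← hu']
  exact h3

end RiccatiLinfty

attribute [local instance] Matrix.normedAddCommGroup Matrix.normedSpace

noncomputable section RiccatiMain

theorem hasDerivWithinAt_matrix {l m : Type*} [Fintype l] [Fintype m]
    {f : ℝ → Matrix l m ℝ} {f' : Matrix l m ℝ} {s : Set ℝ} {t : ℝ} :
    HasDerivWithinAt f f' s t ↔ ∀ i j, HasDerivWithinAt (fun t => f t i j) (f' i j) s t := by
  exact hasDerivWithinAt_pi.trans (forall_congr' fun i => hasDerivWithinAt_pi)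

theorem hasDerivAt_mulVec_entry {l m : Type*} [Fintype l] [Fintype m]
    {f : ℝ → Matrix l m ℝ} {f' : Matrix l m ℝ} {t : ℝ} (u : m → ℝ)
    (hf : ∀ i j, HasDerivAt (fun t => f t i j) (f' i j) t) (i : l) :
    HasDerivAt (fun t => (f t *ᵥ u) i) ((f' *ᵥ u) i) t := by
  simpa [Matrix.mulVec, dotProduct] using
    HasDerivAt.fun_sum (fun j _ => (hf i j).mul_const (u j))

theorem hasDerivWithinAt_matrix_mul_entry {l m p : Type*} [Fintype l] [Fintype m] [Fintype p]
    {f : ℝ → Matrix l m ℝ} {g : ℝ → Matrix m p ℝ} {f' : Matrix l m ℝ} {g' : Matrix m p ℝ}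
    {s : Set ℝ} {t : ℝ}
    (hf : ∀ i j, HasDerivWithinAt (fun t => f t i j) (f' i j) s t)
    (hg : ∀ i j, HasDerivWithinAt (fun t => g t i j) (g' i j) s t) (i : l) (j : p) :
    HasDerivWithinAt (fun t => (f t * g t) i j) ((f' * g t + f t * g') i j) s t := by
  have := HasDerivWithinAt.fun_sum (fun k (_ : k ∈ Finset.univ) => ((hf i k).mul (hg k j)))
  simpa [Matrix.mul_apply, Matrix.add_apply, Finset.sum_add_distrib] using this

theorem matrix_norm_mul_le {n : ℕ} (M N : Matrix (Fin n) (Fin n) ℝ) :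
    ‖M * N‖ ≤ n * ‖M‖ * ‖N‖ := by
  refine (Matrix.norm_le_iff (by positivity)).2 fun i j => ?_
  calc ‖(M * N) i j‖ = |∑ k, M i k * N k j| := rfl
    _ ≤ ∑ k, |M i k * N k j| := Finset.abs_sum_le_sum_abs _ _
    _ ≤ ∑ _k : Fin n, ‖M‖ * ‖N‖ := by
        refine Finset.sum_le_sum fun k _ => ?_
        rw [abs_mul]
        exact mul_le_mul (Matrix.norm_entry_le_entrywise_sup_norm M)
          (Matrix.norm_entry_le_entrywise_sup_norm N) (abs_nonneg _) (norm_nonneg _)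
    _ = n * ‖M‖ * ‖N‖ := by simp [Finset.sum_const, mul_assoc]

variable {n : ℕ}

/-- The Riccati vector field. -/
def Ric (r : ℝ) (A : Matrix (Fin n) (Fin n) ℝ) (B : Matrix (Fin n) (Fin 1) ℝ)
    (Q : Matrix (Fin n) (Fin n) ℝ) (M : Matrix (Fin n) (Fin n) ℝ) : Matrix (Fin n) (Fin n) ℝ :=
  -(M * A + Aᵀ * M - r⁻¹ • (M * B * Bᵀ * M) + Q)

theorem ric_key (r : ℝ) (A : Matrix (Fin n) (Fin n) ℝ) (B : Matrix (Fin n) (Fin 1) ℝ)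
    (Q M N : Matrix (Fin n) (Fin n) ℝ) :
    Ric r A B Q M - Ric r A B Q N =
      -((M - N) * A + Aᵀ * (M - N)
        - r⁻¹ • ((M - N) * (B * Bᵀ) * M + N * (B * Bᵀ) * (M - N))) := by
  simp only [Ric, Matrix.mul_assoc, sub_mul, mul_sub, smul_sub, smul_add, neg_add, neg_sub]
  abel

theorem ric_lip (T r : ℝ) (hr : 0 < r)
    (A : Matrix (Fin n) (Fin n) ℝ) (B : Matrix (Fin n) (Fin 1) ℝ)
    (Q : Matrix (Fin n) (Fin n) ℝ) (R : ℝ) (hR : 0 ≤ R) :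
    LipschitzOnWith
      (Real.toNNReal (2 * n * ‖A‖ + r⁻¹ * (2 * (n : ℝ) ^ 2 * ‖B * Bᵀ‖ * R)))
      (Ric r A B Q) (Metric.closedBall 0 R) := by
  rw [lipschitzOnWith_iff_dist_le_mul]
  intro M hM N hN
  rw [mem_closedBall_zero_iff] at hM hN
  rw [dist_eq_norm, dist_eq_norm, ric_key, norm_neg]
  have h1 : ‖(M - N) * A‖ ≤ n * ‖M - N‖ * ‖A‖ := matrix_norm_mul_le _ _
  have h2 : ‖Aᵀ * (M - N)‖ ≤ n * ‖A‖ * ‖M - N‖ := by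
    simpa using matrix_norm_mul_le Aᵀ (M - N)
  have h3 : ‖(M - N) * (B * Bᵀ) * M‖ ≤ (n : ℝ) ^ 2 * ‖M - N‖ * ‖B * Bᵀ‖ * R := by
    calc ‖(M - N) * (B * Bᵀ) * M‖ ≤ n * ‖(M - N) * (B * Bᵀ)‖ * ‖M‖ := matrix_norm_mul_le _ _
      _ ≤ n * (n * ‖M - N‖ * ‖B * Bᵀ‖) * R := by
          apply mul_le_mul (by gcongr; exact matrix_norm_mul_le _ _) hM (norm_nonneg _) (by positivity)
      _ = (n : ℝ) ^ 2 * ‖M - N‖ * ‖B * Bᵀ‖ * R := by ring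
  have h4 : ‖N * (B * Bᵀ) * (M - N)‖ ≤ (n : ℝ) ^ 2 * ‖M - N‖ * ‖B * Bᵀ‖ * R := by
    calc ‖N * (B * Bᵀ) * (M - N)‖ ≤ n * ‖N * (B * Bᵀ)‖ * ‖M - N‖ := matrix_norm_mul_le _ _
      _ ≤ n * (n * ‖N‖ * ‖B * Bᵀ‖) * ‖M - N‖ := by gcongr; exact matrix_norm_mul_le _ _
      _ ≤ n * (n * R * ‖B * Bᵀ‖) * ‖M - N‖ := by gcongr
      _ = (n : ℝ) ^ 2 * ‖M - N‖ * ‖B * Bᵀ‖ * R := by ring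
  have hrinv : (0 : ℝ) < r⁻¹ := by positivity
  have hcoe : ((Real.toNNReal (2 * n * ‖A‖ + r⁻¹ * (2 * (n : ℝ) ^ 2 * ‖B * Bᵀ‖ * R))) : ℝ)
      = 2 * n * ‖A‖ + r⁻¹ * (2 * (n : ℝ) ^ 2 * ‖B * Bᵀ‖ * R) := by
    rw [Real.coe_toNNReal]; positivity
  rw [hcoe]
  calc ‖(M - N) * A + Aᵀ * (M - N)
        - r⁻¹ • ((M - N) * (B * Bᵀ) * M + N * (B * Bᵀ) * (M - N))‖
      ≤ ‖(M - N) * A + Aᵀ * (M - N)‖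
        + ‖r⁻¹ • ((M - N) * (B * Bᵀ) * M + N * (B * Bᵀ) * (M - N))‖ := norm_sub_le _ _
    _ ≤ (‖(M - N) * A‖ + ‖Aᵀ * (M - N)‖)
        + r⁻¹ * (‖(M - N) * (B * Bᵀ) * M‖ + ‖N * (B * Bᵀ) * (M - N)‖) := by
        gcongr
        · exact norm_add_le _ _
        · rw [norm_smul, Real.norm_eq_abs, abs_of_pos hrinv]
          gcongr
          exact norm_add_le _ _
    _ ≤ (n * ‖M - N‖ * ‖A‖ + n * ‖A‖ * ‖M - N‖)
        + r⁻¹ * ((n : ℝ) ^ 2 * ‖M - N‖ * ‖B * Bᵀ‖ * R + (n : ℝ) ^ 2 * ‖M - N‖ * ‖B * Bᵀ‖ * R) := by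
        gcongr
    _ = (2 * n * ‖A‖ + r⁻¹ * (2 * (n : ℝ) ^ 2 * ‖B * Bᵀ‖ * R)) * ‖M - N‖ := by ring

theorem ric_unique (T r : ℝ) (hr : 0 < r)
    (A : Matrix (Fin n) (Fin n) ℝ) (B : Matrix (Fin n) (Fin 1) ℝ)
    (Q : Matrix (Fin n) (Fin n) ℝ)
    {K₁ K₂ : ℝ → Matrix (Fin n) (Fin n) ℝ}
    (h₁ : ∀ t ∈ Icc (0 : ℝ) T, HasDerivWithinAt K₁ (Ric r A B Q (K₁ t)) (Icc 0 T) t)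
    (h₂ : ∀ t ∈ Icc (0 : ℝ) T, HasDerivWithinAt K₂ (Ric r A B Q (K₂ t)) (Icc 0 T) t)
    (hend : K₁ T = K₂ T) :
    ∀ t ∈ Icc (0 : ℝ) T, K₁ t = K₂ t := by
  rcases le_or_gt T 0 with hT | hT
  · intro t ht
    have : t = T := le_antisymm (ht.2) (hT.trans ht.1)
    rw [this, hend]
  have hc₁ : ContinuousOn K₁ (Icc 0 T) := fun t ht => (h₁ t ht).continuousWithinAt
  have hc₂ : ContinuousOn K₂ (Icc 0 T) := fun t ht => (h₂ t ht).continuousWithinAt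
  obtain ⟨C₁, hC₁⟩ := isCompact_Icc.exists_bound_of_continuousOn hc₁
  obtain ⟨C₂, hC₂⟩ := isCompact_Icc.exists_bound_of_continuousOn hc₂
  set R : ℝ := max (max C₁ C₂) 0 with hRdef
  have hR : 0 ≤ R := le_max_right _ _
  have hmem₁ : ∀ t ∈ Ioc (0 : ℝ) T, K₁ t ∈ Metric.closedBall (0 : Matrix (Fin n) (Fin n) ℝ) R :=
    fun t ht => mem_closedBall_zero_iff.2 <|
      (hC₁ t ⟨ht.1.le, ht.2⟩).trans ((le_max_left _ _).trans (le_max_left _ _))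
  have hmem₂ : ∀ t ∈ Ioc (0 : ℝ) T, K₂ t ∈ Metric.closedBall (0 : Matrix (Fin n) (Fin n) ℝ) R :=
    fun t ht => mem_closedBall_zero_iff.2 <|
      (hC₂ t ⟨ht.1.le, ht.2⟩).trans ((le_max_right _ _).trans (le_max_left _ _))
  have hIcc_mem : ∀ t ∈ Ioc (0 : ℝ) T, Icc (0 : ℝ) T ∈ nhdsWithin t (Iic t) := by
    intro t ht
    rw [mem_nhdsWithin]
    exact ⟨Ioi 0, isOpen_Ioi, ht.1, fun x hx => ⟨hx.1.le, hx.2.trans ht.2⟩⟩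
  have hd₁ : ∀ t ∈ Ioc (0 : ℝ) T,
      HasDerivWithinAt K₁ (Ric r A B Q (K₁ t)) (Iic t) t :=
    fun t ht => (h₁ t ⟨ht.1.le, ht.2⟩).mono_of_mem_nhdsWithin (hIcc_mem t ht)
  have hd₂ : ∀ t ∈ Ioc (0 : ℝ) T,
      HasDerivWithinAt K₂ (Ric r A B Q (K₂ t)) (Iic t) t :=
    fun t ht => (h₂ t ⟨ht.1.le, ht.2⟩).mono_of_mem_nhdsWithin (hIcc_mem t ht)
  exact fun t ht =>
    ODE_solution_unique_of_mem_Icc_left (fun _ _ => ric_lip T r hr A B Q R hR)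
      hc₁ hd₁ hmem₁ hc₂ hd₂ hmem₂ hend ht

def Sm (r : ℝ) (B : Matrix (Fin n) (Fin 1) ℝ) : Matrix (Fin n) (Fin n) ℝ := r⁻¹ • (B * Bᵀ)

def Ham (r : ℝ) (A : Matrix (Fin n) (Fin n) ℝ) (B : Matrix (Fin n) (Fin 1) ℝ)
    (Q : Matrix (Fin n) (Fin n) ℝ) : Matrix (Fin n ⊕ Fin n) (Fin n ⊕ Fin n) ℝ :=
  fromBlocks A (-(Sm r B)) (-Q) (-Aᵀ)

variable (T r : ℝ) (A : Matrix (Fin n) (Fin n) ℝ) (B : Matrix (Fin n) (Fin 1) ℝ)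
  (Q : Matrix (Fin n) (Fin n) ℝ)

def Wm (t : ℝ) : Matrix (Fin n ⊕ Fin n) (Fin n ⊕ Fin n) ℝ := myExp (Ham r A B Q) (t - T)

def Xm (t : ℝ) : Matrix (Fin n) (Fin n) ℝ := (Wm T r A B Q t).toBlocks₁₁
def Ym (t : ℝ) : Matrix (Fin n) (Fin n) ℝ := (Wm T r A B Q t).toBlocks₂₁

lemma Wm_T : Wm T r A B Q T = 1 := by rw [Wm, sub_self, myExp_zero]

lemma Xm_T : Xm T r A B Q T = 1 := by
  rw [Xm, Wm_T, ← fromBlocks_one, toBlocks_fromBlocks₁₁]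

lemma Ym_T : Ym T r A B Q T = 0 := by
  rw [Ym, Wm_T, ← fromBlocks_one, toBlocks_fromBlocks₂₁]

lemma Wm_deriv (t : ℝ) (i j : Fin n ⊕ Fin n) :
    HasDerivAt (fun t => Wm T r A B Q t i j) ((Ham r A B Q * Wm T r A B Q t) i j) t := by
  have h := (myExp_entry_deriv (Ham r A B Q) (t - T) i j).comp t
    ((hasDerivAt_id t).sub_const T)
  simp only [id, mul_one] at h; exact h

lemma Ham_mul_Wm (t : ℝ) :
    Ham r A B Q * Wm T r A B Q t =
      fromBlocks (A * Xm T r A B Q t + (-(Sm r B)) * Ym T r A B Q t)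
        (A * (Wm T r A B Q t).toBlocks₁₂ + (-(Sm r B)) * (Wm T r A B Q t).toBlocks₂₂)
        ((-Q) * Xm T r A B Q t + (-Aᵀ) * Ym T r A B Q t)
        ((-Q) * (Wm T r A B Q t).toBlocks₁₂ + (-Aᵀ) * (Wm T r A B Q t).toBlocks₂₂) := by
  conv_lhs => rw [← fromBlocks_toBlocks (Wm T r A B Q t), Ham, fromBlocks_multiply]
  rfl

lemma Xm_deriv (t : ℝ) (i j : Fin n) :
    HasDerivAt (fun t => Xm T r A B Q t i j)
      ((A * Xm T r A B Q t - Sm r B * Ym T r A B Q t) i j) t := by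
  have h := Wm_deriv T r A B Q t (Sum.inl i) (Sum.inl j)
  rw [Ham_mul_Wm] at h
  simpa [Xm, toBlocks₁₁, fromBlocks, neg_mul, sub_eq_add_neg] using h

lemma Ym_deriv (t : ℝ) (i j : Fin n) :
    HasDerivAt (fun t => Ym T r A B Q t i j)
      ((-(Q * Xm T r A B Q t) - Aᵀ * Ym T r A B Q t) i j) t := by
  have h := Wm_deriv T r A B Q t (Sum.inr i) (Sum.inl j)
  rw [Ham_mul_Wm] at h
  simpa [Ym, toBlocks₂₁, fromBlocks, neg_mul, sub_eq_add_neg] using h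

/-- `φ u t = ⟨y(t), x(t)⟩` along the Hamiltonian flow with terminal data `(u, 0)`. -/
def phi (u : Fin n → ℝ) (t : ℝ) : ℝ :=
  (Ym T r A B Q t *ᵥ u) ⬝ᵥ (Xm T r A B Q t *ᵥ u)

lemma phi_T (u : Fin n → ℝ) : phi T r A B Q u T = 0 := by
  simp [phi, Ym_T]

lemma phi_deriv (u : Fin n → ℝ) (t : ℝ) :
    HasDerivAt (phi T r A B Q u)
      (-((Xm T r A B Q t *ᵥ u) ⬝ᵥ (Q *ᵥ (Xm T r A B Q t *ᵥ u)))
        - r⁻¹ * ((Bᵀ *ᵥ (Ym T r A B Q t *ᵥ u)) ⬝ᵥ (Bᵀ *ᵥ (Ym T r A B Q t *ᵥ u)))) t := by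
  set x : Fin n → ℝ := Xm T r A B Q t *ᵥ u with hx
  set y : Fin n → ℝ := Ym T r A B Q t *ᵥ u with hy
  have hxd := hasDerivAt_mulVec_entry u (Xm_deriv T r A B Q t)
  have hyd := hasDerivAt_mulVec_entry u (Ym_deriv T r A B Q t)
  have hsum : HasDerivAt (phi T r A B Q u)
      (∑ i, (((-(Q * Xm T r A B Q t) - Aᵀ * Ym T r A B Q t) *ᵥ u) i * x i
        + y i * ((A * Xm T r A B Q t - Sm r B * Ym T r A B Q t) *ᵥ u) i)) t := by
    have := HasDerivAt.fun_sum (fun i (_ : i ∈ Finset.univ) => ((hyd i).mul (hxd i)))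
    exact this
  convert hsum using 1
  have e1 : (-(Q * Xm T r A B Q t) - Aᵀ * Ym T r A B Q t) *ᵥ u
      = -(Q *ᵥ x) - Aᵀ *ᵥ y := by
    rw [Matrix.sub_mulVec, Matrix.neg_mulVec, ← Matrix.mulVec_mulVec, ← Matrix.mulVec_mulVec, hx, hy]
  have e2 : (A * Xm T r A B Q t - Sm r B * Ym T r A B Q t) *ᵥ u
      = A *ᵥ x - Sm r B *ᵥ y := by
    rw [Matrix.sub_mulVec, ← Matrix.mulVec_mulVec, ← Matrix.mulVec_mulVec, hx, hy]
  have hsum_eq : (∑ i, (((-(Q * Xm T r A B Q t) - Aᵀ * Ym T r A B Q t) *ᵥ u) i * x i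
        + y i * ((A * Xm T r A B Q t - Sm r B * Ym T r A B Q t) *ᵥ u) i))
      = (-(Q *ᵥ x) - Aᵀ *ᵥ y) ⬝ᵥ x + y ⬝ᵥ (A *ᵥ x - Sm r B *ᵥ y) := by
    rw [e1, e2, dotProduct, dotProduct, ← Finset.sum_add_distrib]
  rw [hsum_eq]
  have hA : (Aᵀ *ᵥ y) ⬝ᵥ x = y ⬝ᵥ (A *ᵥ x) := by
    rw [Matrix.mulVec_transpose, ← Matrix.dotProduct_mulVec]
  have hQc : (Q *ᵥ x) ⬝ᵥ x = x ⬝ᵥ (Q *ᵥ x) := dotProduct_comm _ _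
  have hS : y ⬝ᵥ (Sm r B *ᵥ y) = r⁻¹ * ((Bᵀ *ᵥ y) ⬝ᵥ (Bᵀ *ᵥ y)) := by
    rw [Sm, Matrix.smul_mulVec, dotProduct_smul, smul_eq_mul,
      ← Matrix.mulVec_mulVec, Matrix.dotProduct_mulVec, ← Matrix.mulVec_transpose]
  rw [sub_dotProduct, neg_dotProduct, dotProduct_sub, hA, hQc, hS]
  ring

variable (hr : 0 < r) (hQ : Q.PosSemidef)

lemma dotProduct_self_nonneg (v : Fin n → ℝ) : 0 ≤ v ⬝ᵥ v :=
  Finset.sum_nonneg fun i _ => mul_self_nonneg _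

variable (hr : 0 < r) (hQ : Q.PosSemidef)
include hr hQ

lemma phi_deriv_nonpos (u : Fin n → ℝ) (t : ℝ) :
    (-((Xm T r A B Q t *ᵥ u) ⬝ᵥ (Q *ᵥ (Xm T r A B Q t *ᵥ u)))
        - r⁻¹ * ((Bᵀ *ᵥ (Ym T r A B Q t *ᵥ u)) ⬝ᵥ (Bᵀ *ᵥ (Ym T r A B Q t *ᵥ u)))) ≤ 0 := by
  have h1 : 0 ≤ (Xm T r A B Q t *ᵥ u) ⬝ᵥ (Q *ᵥ (Xm T r A B Q t *ᵥ u)) := by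
    simpa using (Matrix.posSemidef_iff_dotProduct_mulVec.1 hQ).2 (Xm T r A B Q t *ᵥ u)
  have h2 : 0 ≤ (Bᵀ *ᵥ (Ym T r A B Q t *ᵥ u)) ⬝ᵥ (Bᵀ *ᵥ (Ym T r A B Q t *ᵥ u)) :=
    dotProduct_self_nonneg _
  have h3 : 0 < r⁻¹ := by positivity
  nlinarith

lemma phi_anti (u : Fin n → ℝ) : Antitone (phi T r A B Q u) := by
  refine antitone_of_deriv_nonpos (fun t => (phi_deriv T r A B Q u t).differentiableAt) fun t => ?_
  rw [(phi_deriv T r A B Q u t).deriv]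
  exact phi_deriv_nonpos T r A B Q hr hQ u t

lemma phi_nonneg (u : Fin n → ℝ) {t : ℝ} (ht : t ≤ T) : 0 ≤ phi T r A B Q u t := by
  have := phi_anti T r A B Q hr hQ u ht
  rwa [phi_T] at this

lemma Xm_det_isUnit {t : ℝ} (ht : t ∈ Icc 0 T) : IsUnit (Xm T r A B Q t).det := by
  rw [isUnit_iff_ne_zero]
  intro hdet
  obtain ⟨u, hu0, hXu⟩ := (Matrix.exists_mulVec_eq_zero_iff).2 hdet
  -- t < T since Xm T is the identity
  have htT : t < T := by
    rcases lt_or_eq_of_le ht.2 with h | h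
    · exact h
    · exfalso; rw [h, Xm_T] at hXu; simp [Matrix.one_mulVec] at hXu; exact hu0 hXu
  -- phi u vanishes on [t, T]
  have hphit : phi T r A B Q u t = 0 := by simp [phi, hXu]
  have hconst : ∀ s ∈ Icc t T, phi T r A B Q u s = 0 := by
    intro s hs
    have h1 := phi_anti T r A B Q hr hQ u hs.1
    have h2 := phi_anti T r A B Q hr hQ u hs.2
    rw [hphit] at h1
    rw [phi_T] at h2
    linarith
  -- B^T y vanishes on the open interval
  have hBy : ∀ s ∈ Ioo t T, Bᵀ *ᵥ (Ym T r A B Q s *ᵥ u) = 0 := by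
    intro s hs
    have h0 : HasDerivAt (phi T r A B Q u) 0 s := by
      refine (hasDerivAt_const s (0 : ℝ)).congr_of_eventuallyEq ?_
      filter_upwards [Ioo_mem_nhds hs.1 hs.2] with x hx
      exact hconst x ⟨hx.1.le, hx.2.le⟩
    have huniq := h0.unique (phi_deriv T r A B Q u s)
    have h1 : 0 ≤ (Xm T r A B Q s *ᵥ u) ⬝ᵥ (Q *ᵥ (Xm T r A B Q s *ᵥ u)) := by
      simpa using (Matrix.posSemidef_iff_dotProduct_mulVec.1 hQ).2 (Xm T r A B Q s *ᵥ u)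
    have h2 : 0 ≤ (Bᵀ *ᵥ (Ym T r A B Q s *ᵥ u)) ⬝ᵥ (Bᵀ *ᵥ (Ym T r A B Q s *ᵥ u)) :=
      dotProduct_self_nonneg _
    have h3 : 0 < r⁻¹ := by positivity
    have hz : (Bᵀ *ᵥ (Ym T r A B Q s *ᵥ u)) ⬝ᵥ (Bᵀ *ᵥ (Ym T r A B Q s *ᵥ u)) = 0 := by
      nlinarith
    exact dotProduct_self_eq_zero.1 hz
  -- continuity of s ↦ B^T y(s)
  have hYc : ∀ j k, Continuous fun s => Ym T r A B Q s j k := fun j k =>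
    Differentiable.continuous (fun s => (Ym_deriv T r A B Q s j k).differentiableAt)
  have hgc : Continuous fun s => Bᵀ *ᵥ (Ym T r A B Q s *ᵥ u) := by
    refine continuous_pi fun i => ?_
    simp only [Matrix.mulVec, dotProduct]
    exact continuous_finset_sum _ fun j _ => continuous_const.mul
      (continuous_finset_sum _ fun k _ => ((hYc j k).mul continuous_const))
  have hByIcc : ∀ s ∈ Icc t T, Bᵀ *ᵥ (Ym T r A B Q s *ᵥ u) = 0 := by
    have hcl : EqOn (fun s => Bᵀ *ᵥ (Ym T r A B Q s *ᵥ u)) 0 (closure (Ioo t T)) :=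
      Set.EqOn.closure (fun s hs => hBy s hs) hgc continuous_const
    intro s hs
    have := hcl (by rw [closure_Ioo htT.ne]; exact hs)
    exact this
  -- x := X(·) *ᵥ u solves x' = A x on [t, T] with x t = 0, hence x ≡ 0
  have hxc : Continuous fun s => Xm T r A B Q s *ᵥ u := by
    refine continuous_pi fun i => ?_
    simp only [Matrix.mulVec, dotProduct]
    exact continuous_finset_sum _ fun j _ =>
      ((Differentiable.continuous
        (fun s => (Xm_deriv T r A B Q s i j).differentiableAt)).mul continuous_const)
  have hxd : ∀ s ∈ Ico t T,
      HasDerivWithinAt (fun s => Xm T r A B Q s *ᵥ u)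
        (A *ᵥ (Xm T r A B Q s *ᵥ u)) (Ici s) s := by
    intro s hs
    have hd : HasDerivAt (fun s => Xm T r A B Q s *ᵥ u)
        ((A * Xm T r A B Q s - Sm r B * Ym T r A B Q s) *ᵥ u) s := by
      rw [hasDerivAt_pi]
      exact hasDerivAt_mulVec_entry u (Xm_deriv T r A B Q s)
    have hval : (A * Xm T r A B Q s - Sm r B * Ym T r A B Q s) *ᵥ u
        = A *ᵥ (Xm T r A B Q s *ᵥ u) := by
      rw [Matrix.sub_mulVec, ← Matrix.mulVec_mulVec, ← Matrix.mulVec_mulVec,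
        Sm, Matrix.smul_mulVec, ← Matrix.mulVec_mulVec,
        hByIcc s ⟨hs.1, hs.2.le⟩]
      simp
    rw [hval] at hd
    exact hd.hasDerivWithinAt
  have heq := ODE_solution_unique_of_mem_Icc_right
    (v := fun _ z => A *ᵥ z) (s := fun _ => (univ : Set (Fin n → ℝ)))
    (K := ‖(Matrix.mulVecLin A).toContinuousLinearMap‖₊)
    (fun _ _ => ((Matrix.mulVecLin A).toContinuousLinearMap.lipschitz).lipschitzOnWith)
    hxc.continuousOn hxd (fun _ _ => mem_univ _)
    (continuousOn_const (c := (0 : Fin n → ℝ)))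
    (fun s _ => by
      have h0 : A *ᵥ (0 : Fin n → ℝ) = 0 := Matrix.mulVec_zero A
      simpa [h0] using (hasDerivWithinAt_const s (Ici s) (0 : Fin n → ℝ)))
    (fun _ _ => mem_univ _) (by simpa using hXu)
  have hxT := heq (right_mem_Icc.2 htT.le)
  simp only [Xm_T, Matrix.one_mulVec] at hxT
  exact hu0 hxT

/-- The Riccati solution. -/
def Km (t : ℝ) : Matrix (Fin n) (Fin n) ℝ := Ym T r A B Q t * (Xm T r A B Q t)⁻¹

omit hr hQ in
lemma Km_T : Km T r A B Q T = 0 := by rw [Km, Ym_T, Matrix.zero_mul]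

include hr hQ in
lemma Km_hasDeriv {t : ℝ} (ht : t ∈ Icc 0 T) :
    HasDerivWithinAt (Km T r A B Q) (Ric r A B Q (Km T r A B Q t)) (Icc 0 T) t := by
  have hdet := Xm_det_isUnit T r A B Q hr hQ ht
  have hunit : IsUnit (Xm T r A B Q t) := (Matrix.isUnit_iff_isUnit_det _).2 hdet
  have hXV : Xm T r A B Q t * (Xm T r A B Q t)⁻¹ = 1 := Matrix.mul_nonsing_inv _ hdet
  set V : ℝ → Matrix (Fin n) (Fin n) ℝ := fun s => (Xm T r A B Q s)⁻¹ with hV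
  set X' : Matrix (Fin n) (Fin n) ℝ := A * Xm T r A B Q t - Sm r B * Ym T r A B Q t with hX'
  set Y' : Matrix (Fin n) (Fin n) ℝ := -(Q * Xm T r A B Q t) - Aᵀ * Ym T r A B Q t with hY'
  have hXd : ∀ i j, HasDerivWithinAt (fun s => Xm T r A B Q s i j) (X' i j) (Icc 0 T) t :=
    fun i j => (Xm_deriv T r A B Q t i j).hasDerivWithinAt
  have hYd : ∀ i j, HasDerivWithinAt (fun s => Ym T r A B Q s i j) (Y' i j) (Icc 0 T) t :=
    fun i j => (Ym_deriv T r A B Q t i j).hasDerivWithinAt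
  have hVd : ∀ i j, HasDerivWithinAt (fun s => V s i j) ((-(V t * X' * V t)) i j) (Icc 0 T) t :=
    fun i j => inv_entry_deriv hXd hunit i j
  have hKd : HasDerivWithinAt (Km T r A B Q)
      (Y' * V t + Ym T r A B Q t * -(V t * X' * V t)) (Icc 0 T) t := by
    rw [hasDerivWithinAt_matrix]
    intro i j
    exact hasDerivWithinAt_matrix_mul_entry hYd hVd i j
  have hval : Y' * V t + Ym T r A B Q t * -(V t * X' * V t) = Ric r A B Q (Km T r A B Q t) := by
    have hK : Km T r A B Q t = Ym T r A B Q t * V t := rfl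
    have e1 : Y' * V t = -Q - Aᵀ * Km T r A B Q t := by
      rw [hY', hK, Matrix.sub_mul, Matrix.neg_mul, Matrix.mul_assoc Q, hXV,
        Matrix.mul_one, Matrix.mul_assoc]
    have step2 : X' * V t = A - Sm r B * Km T r A B Q t := by
      rw [hX', hK, Matrix.sub_mul, Matrix.mul_assoc A, hXV, Matrix.mul_one, Matrix.mul_assoc]
    have e2 : Ym T r A B Q t * -(V t * X' * V t)
        = -(Km T r A B Q t * A - Km T r A B Q t * Sm r B * Km T r A B Q t) := by
      rw [Matrix.mul_assoc (V t), step2, Matrix.mul_neg, ← Matrix.mul_assoc, ← hK,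
        Matrix.mul_sub, ← Matrix.mul_assoc]
    have hs : Km T r A B Q t * Sm r B * Km T r A B Q t
        = r⁻¹ • (Km T r A B Q t * B * Bᵀ * Km T r A B Q t) := by
      rw [Sm, Matrix.mul_smul, Matrix.smul_mul]
      simp [Matrix.mul_assoc]
    rw [e1, e2, hs, Ric]
    abel
  rw [← hval]; exact hKd

omit hr hQ in
lemma ric_transpose (hQs : Qᵀ = Q) (M : Matrix (Fin n) (Fin n) ℝ) :
    (Ric r A B Q M)ᵀ = Ric r A B Q Mᵀ := by
  rw [Ric, Ric]
  simp only [Matrix.transpose_neg, Matrix.transpose_add, Matrix.transpose_sub,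
    Matrix.transpose_smul, Matrix.transpose_mul, Matrix.transpose_transpose, hQs,
    Matrix.mul_assoc]
  abel


include hr hQ in
lemma Km_symm {t : ℝ} (ht : t ∈ Icc 0 T) : (Km T r A B Q t).IsSymm := by
  have hQsym : Qᵀ = Q := by
    have := hQ.1.eq
    simpa using this
  have h₁ : ∀ s ∈ Icc (0 : ℝ) T,
      HasDerivWithinAt (fun s => (Km T r A B Q s)ᵀ)
        (Ric r A B Q ((Km T r A B Q s)ᵀ)) (Icc 0 T) s := by
    intro s hs
    have h := Km_hasDeriv T r A B Q hr hQ hs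
    rw [hasDerivWithinAt_matrix] at h ⊢
    intro i j
    have := h j i
    rw [← ric_transpose r A B Q hQsym]
    exact this
  have hend : (Km T r A B Q T)ᵀ = Km T r A B Q T := by rw [Km_T]; simp
  exact ric_unique T r hr A B Q h₁ (fun s hs => Km_hasDeriv T r A B Q hr hQ hs) hend t ht

include hr hQ in
lemma Km_posSemidef {t : ℝ} (ht : t ∈ Icc 0 T) : (Km T r A B Q t).PosSemidef := by
  have hdet := Xm_det_isUnit T r A B Q hr hQ ht
  have hXV : Xm T r A B Q t * (Xm T r A B Q t)⁻¹ = 1 := Matrix.mul_nonsing_inv _ hdet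
  rw [Matrix.posSemidef_iff_dotProduct_mulVec]
  constructor
  · -- Hermitian
    have hs := Km_symm T r A B Q hr hQ ht
    rw [Matrix.IsHermitian]
    simpa using hs.eq
  · intro v
    set u : Fin n → ℝ := (Xm T r A B Q t)⁻¹ *ᵥ v with hu
    have hx : Xm T r A B Q t *ᵥ u = v := by
      rw [hu, Matrix.mulVec_mulVec, hXV, Matrix.one_mulVec]
    have hy : Ym T r A B Q t *ᵥ u = Km T r A B Q t *ᵥ v := by
      rw [hu, Matrix.mulVec_mulVec, Km]
    have hphi := phi_nonneg T r A B Q hr hQ u ht.2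
    rw [phi, hx, hy] at hphi
    simpa [dotProduct_comm] using hphi

-- continuity of the Riccati vector field
omit hr hQ in
lemma ric_continuous : Continuous (Ric r A B Q) := by
  unfold Ric
  refine Continuous.neg (Continuous.add (Continuous.sub (Continuous.add ?_ ?_) ?_) continuous_const)
  · exact continuous_id.matrix_mul continuous_const
  · exact continuous_const.matrix_mul continuous_id
  · exact (((continuous_id.matrix_mul continuous_const).matrix_mul
      continuous_const).matrix_mul continuous_id).const_smul r⁻¹

end RiccatiMain



/-- The finite-horizon matrix Riccati terminal value problem
`K' + KA + AᵀK − K B r⁻¹ Bᵀ K + Q = 0`, `K(T) = 0`, with `Q` symmetric positive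
semidefinite, has a unique continuously differentiable solution on `[0,T]`, and the
solution is symmetric positive semidefinite at each time. -/
theorem riccati_terminal_value_existence_uniqueness
    (n : ℕ) (hn : 1 ≤ n) (T r : ℝ) (hT : 0 < T) (hr : 0 < r)
    (A : Matrix (Fin n) (Fin n) ℝ) (B : Matrix (Fin n) (Fin 1) ℝ)
    (Q : Matrix (Fin n) (Fin n) ℝ) (hQ : Q.PosSemidef) :
    ∃ K : ℝ → Matrix (Fin n) (Fin n) ℝ,
      ((∃ K' : ℝ → Matrix (Fin n) (Fin n) ℝ,
          ContinuousOn K' (Icc 0 T) ∧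
          ∀ t ∈ Icc (0 : ℝ) T,
            HasDerivWithinAt K (K' t) (Icc 0 T) t ∧
            K' t + K t * A + Aᵀ * K t - r⁻¹ • (K t * B * Bᵀ * K t) + Q = 0) ∧
        K T = 0) ∧
      (∀ K₂ : ℝ → Matrix (Fin n) (Fin n) ℝ,
        ((∃ K₂' : ℝ → Matrix (Fin n) (Fin n) ℝ,
            ContinuousOn K₂' (Icc 0 T) ∧
            ∀ t ∈ Icc (0 : ℝ) T,
              HasDerivWithinAt K₂ (K₂' t) (Icc 0 T) t ∧
              K₂' t + K₂ t * A + Aᵀ * K₂ t - r⁻¹ • (K₂ t * B * Bᵀ * K₂ t) + Q = 0) ∧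
          K₂ T = 0) →
        ∀ t ∈ Icc (0 : ℝ) T, K₂ t = K t) ∧
      (∀ t ∈ Icc (0 : ℝ) T, (K t).IsSymm ∧ (K t).PosSemidef) := by
  refine ⟨Km T r A B Q, ⟨⟨fun t => Ric r A B Q (Km T r A B Q t), ?_, ?_⟩, Km_T T r A B Q⟩, ?_, ?_⟩
  · have hKc : ContinuousOn (Km T r A B Q) (Icc 0 T) :=
      fun t ht => (Km_hasDeriv T r A B Q hr hQ ht).continuousWithinAt
    exact (ric_continuous r A B Q).comp_continuousOn hKc
  · intro t ht
    refine ⟨Km_hasDeriv T r A B Q hr hQ ht, ?_⟩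
    simp only [Ric]
    abel
  · rintro K₂ ⟨⟨K₂', hK₂'c, hK₂⟩, hK₂T⟩ t ht
    have h₂ : ∀ s ∈ Icc (0 : ℝ) T, HasDerivWithinAt K₂ (Ric r A B Q (K₂ s)) (Icc 0 T) s := by
      intro s hs
      have hd := (hK₂ s hs).1
      have he := (hK₂ s hs).2
      have hval : K₂' s = Ric r A B Q (K₂ s) := by
        simp only [Ric]
        have h0 : K₂' s + (K₂ s * A + Aᵀ * K₂ s - r⁻¹ • (K₂ s * B * Bᵀ * K₂ s) + Q) = 0 := by
          rw [← he]; abel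
        exact eq_neg_of_add_eq_zero_left h0
      rwa [hval] at hd
    exact ric_unique T r hr A B Q h₂ (fun s hs => Km_hasDeriv T r A B Q hr hQ hs)
      (by rw [hK₂T, Km_T]) t ht
  · intro t ht
    exact ⟨Km_symm T r A B Q hr hQ ht, Km_posSemidef T r A B Q hr hQ ht⟩
end
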